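/- Let L be a self-adjoint continuous linear operator on the N-partite Hilbert space H, and let ρ be a finite convex combination of projectors onto unit product vectors, i.e., ρ = Σ_{i ∈ I} p_i • (orthogonal projection onto span of v_i) with I finite, p_i ≥ 0, Σ p_i = 1, and each v_i a unit product vector. Then tr(L ρ) ≤ g_max(L), where g_max(L) is the supremum of ⟨w, L w⟩ over all unit product vectors w. (Soundness of the entanglement criterion: separable states cannot violate tr(Lρ) ≤ g_max.) -/

import Mathlib

open scoped ComplexInnerProductSpace

/-- The product vector `P(a)` of a family of vectors, `P(a) i = ∏ j, a j (i j)`. -/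
noncomputable def prodVec {N : ℕ} {d : Fin N → ℕ}
    (a : (j : Fin N) → EuclideanSpace ℂ (Fin (d j))) :
    EuclideanSpace ℂ ((j : Fin N) → Fin (d j)) :=
  WithLp.toLp 2 (fun i => ∏ j, a j (i j))

/-- A unit product vector: `v = P(a)` with every `a j` a unit vector. -/
def IsUnitProd {N : ℕ} {d : Fin N → ℕ}
    (v : EuclideanSpace ℂ ((j : Fin N) → Fin (d j))) : Prop :=
  ∃ a : (j : Fin N) → EuclideanSpace ℂ (Fin (d j)), (∀ j, ‖a j‖ = 1) ∧ v = prodVec a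

lemma inner_prodVec {N : ℕ} {d : Fin N → ℕ}
    (a b : (j : Fin N) → EuclideanSpace ℂ (Fin (d j))) :
    ⟪prodVec a, prodVec b⟫ = ∏ j, ⟪a j, b j⟫ := by
  classical
  simp only [PiLp.inner_apply, RCLike.inner_apply, prodVec, PiLp.toLp_apply, map_prod]
  rw [Fintype.prod_sum]
  exact Finset.sum_congr rfl fun i _ => Finset.prod_mul_distrib.symm

lemma norm_prodVec_one {N : ℕ} {d : Fin N → ℕ}
    {a : (j : Fin N) → EuclideanSpace ℂ (Fin (d j))} (ha : ∀ j, ‖a j‖ = 1) :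
    ‖prodVec a‖ = 1 := by
  have h : ⟪prodVec a, prodVec a⟫ = 1 := by
    rw [inner_prodVec]
    have : ∀ j, ⟪a j, a j⟫ = 1 := fun j => by
      rw [inner_self_eq_norm_sq_to_K, ha j]; norm_num
    simp [this, ha]
  have := inner_self_eq_norm_sq (𝕜 := ℂ) (prodVec a)
  rw [h] at this
  simp only [RCLike.one_re] at this
  nlinarith [norm_nonneg (prodVec a)]


lemma trace_eq_sum_inner' {n : Type*} [Fintype n] [DecidableEq n]
    {E : Type*} [NormedAddCommGroup E] [InnerProductSpace ℂ E]
    (b : OrthonormalBasis n ℂ E) (T : E →ₗ[ℂ] E) :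
    LinearMap.trace ℂ E T = ∑ i, ⟪b i, T (b i)⟫ := by
  rw [LinearMap.trace_eq_matrix_trace ℂ b.toBasis, Matrix.trace]
  refine Finset.sum_congr rfl fun i _ => ?_
  rw [Matrix.diag_apply, LinearMap.toMatrix_apply, b.coe_toBasis,
    b.coe_toBasis_repr_apply, b.repr_apply_apply]

lemma trace_comp_proj {n : Type*} [Fintype n] [DecidableEq n]
    (L : EuclideanSpace ℂ n →L[ℂ] EuclideanSpace ℂ n)
    (v : EuclideanSpace ℂ n) (hn : ‖v‖ = 1) :
    LinearMap.trace ℂ _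
      (L ∘L ((ℂ ∙ v).subtypeL ∘L (ℂ ∙ v).orthogonalProjectionOnto)).toLinearMap
      = ⟪v, L v⟫ := by
  rw [trace_eq_sum_inner' (EuclideanSpace.basisFun n ℂ)]
  have hproj : ∀ w, ((ℂ ∙ v).subtypeL ∘L (ℂ ∙ v).orthogonalProjectionOnto) w
      = ⟪v, w⟫ • v := by
    intro w
    simp only [ContinuousLinearMap.coe_comp', Function.comp_apply,
      Submodule.subtypeL_apply, ← Submodule.starProjection_apply,
      Submodule.starProjection_singleton, hn]
    norm_num
  calc ∑ i, ⟪(EuclideanSpace.basisFun n ℂ) i,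
        (L ∘L ((ℂ ∙ v).subtypeL ∘L (ℂ ∙ v).orthogonalProjectionOnto))
          ((EuclideanSpace.basisFun n ℂ) i)⟫
      = ∑ i, ⟪v, (EuclideanSpace.basisFun n ℂ) i⟫ *
          ⟪(EuclideanSpace.basisFun n ℂ) i, L v⟫ := by
        refine Finset.sum_congr rfl fun i _ => ?_
        rw [ContinuousLinearMap.comp_apply, hproj, map_smul, inner_smul_right]
    _ = ⟪v, L v⟫ := (EuclideanSpace.basisFun n ℂ).sum_inner_mul_inner v (L v)

theorem separable_state_bound {N : ℕ} {d : Fin (N + 1) → ℕ}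
    (L ρ : EuclideanSpace ℂ ((j : Fin (N + 1)) → Fin (d j)) →L[ℂ]
        EuclideanSpace ℂ ((j : Fin (N + 1)) → Fin (d j)))
    (hLsa : IsSelfAdjoint L)
    {ι : Type*} [Fintype ι]
    (p : ι → ℝ) (hp : ∀ i, 0 ≤ p i) (hpsum : ∑ i, p i = 1)
    (v : ι → EuclideanSpace ℂ ((j : Fin (N + 1)) → Fin (d j)))
    (hv : ∀ i, IsUnitProd (v i))
    (hρ : ρ = ∑ i, (p i : ℂ) •
      ((ℂ ∙ v i).subtypeL ∘L (ℂ ∙ v i).orthogonalProjectionOnto)) :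
    (LinearMap.trace ℂ _ (L ∘L ρ).toLinearMap).re
      ≤ sSup {r : ℝ | ∃ w, IsUnitProd w ∧ r = (⟪w, L w⟫).re} := by
  classical
  set S := {r : ℝ | ∃ w, IsUnitProd w ∧ r = (⟪w, L w⟫).re} with hS
  have hbdd : BddAbove S := by
    refine ⟨‖L‖, ?_⟩
    rintro r ⟨w, hw, rfl⟩
    obtain ⟨a, ha, rfl⟩ := hw
    have hwn : ‖prodVec a‖ = 1 := norm_prodVec_one ha
    calc (⟪prodVec a, L (prodVec a)⟫).re
        ≤ ‖⟪prodVec a, L (prodVec a)⟫‖ := Complex.re_le_norm _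
      _ ≤ ‖prodVec a‖ * ‖L (prodVec a)‖ := norm_inner_le_norm _ _
      _ ≤ ‖prodVec a‖ * (‖L‖ * ‖prodVec a‖) := by
          gcongr; exact L.le_opNorm _
      _ = ‖L‖ := by rw [hwn]; ring
  have hmem : ∀ i, (⟪v i, L (v i)⟫).re ∈ S := fun i => ⟨v i, hv i, rfl⟩
  have hnorm : ∀ i, ‖v i‖ = 1 := by
    intro i
    obtain ⟨a, ha, hva⟩ := hv i
    rw [hva]; exact norm_prodVec_one ha
  have hcomp : L ∘L ρ = ∑ i, (p i : ℂ) •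
      (L ∘L ((ℂ ∙ v i).subtypeL ∘L (ℂ ∙ v i).orthogonalProjectionOnto)) := by
    rw [hρ]
    ext x
    simp [ContinuousLinearMap.sum_apply, map_smul]
  have htr : LinearMap.trace ℂ _ (L ∘L ρ).toLinearMap
      = ∑ i, (p i : ℂ) * ⟪v i, L (v i)⟫ := by
    rw [hcomp]
    rw [ContinuousLinearMap.coe_sum, map_sum]
    refine Finset.sum_congr rfl fun i _ => ?_
    rw [ContinuousLinearMap.coe_smul, map_smul, smul_eq_mul,
      trace_comp_proj L (v i) (hnorm i)]
  rw [htr, Complex.re_sum]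
  have : ∀ i ∈ Finset.univ, ((p i : ℂ) * ⟪v i, L (v i)⟫).re
      ≤ p i * sSup S := by
    intro i _
    rw [Complex.re_ofReal_mul]
    exact mul_le_mul_of_nonneg_left (le_csSup hbdd (hmem i)) (hp i)
  calc ∑ i, ((p i : ℂ) * ⟪v i, L (v i)⟫).re
      ≤ ∑ i, p i * sSup S := Finset.sum_le_sum this
    _ = sSup S := by rw [← Finset.sum_mul, hpsum, one_mul]
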